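/- Let c₁ > 0 be the constant (independent of x₀ and of r ∈ (0,1/2]) such that E_x τ_{B(x₀,2r)} ≤ c₁ r² for all x ∈ B(x₀,2r). Then for every x₀ ∈ ℝ^d, every r ∈ (0, 1/2], and every x ∈ B(x₀, 2r), one has P_x( ζ > τ_{B(x₀,2r)} ) ≥ exp( −‖q‖_∞ r ) − c₁ r. -/

import Mathlib

open MeasureTheory Set Filter
open scoped ENNReal NNReal Classical

noncomputable section

/-- Euclidean space `ℝ^d`. -/
abbrev Rd (d : ℕ) := EuclideanSpace ℝ (Fin d)

/-- The non-local operator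
`L f(x) = Σ a_{kl} ∂²f/∂x_k∂x_l + Σ b_k ∂f/∂x_k + ∫ (f(x+z) − f(x) − ∇f(x)·z 1_{|z|<1}) π(x,dz)`. -/
def Lop {d : ℕ} (a : Rd d → Matrix (Fin d) (Fin d) ℝ) (b : Rd d → Rd d)
    (π : Rd d → Measure (Rd d)) (f : Rd d → ℝ) (x : Rd d) : ℝ :=
  (∑ k : Fin d, ∑ l : Fin d, a x k l *
      fderiv ℝ (fun y => fderiv ℝ f y (EuclideanSpace.single l (1:ℝ))) x
        (EuclideanSpace.single k (1:ℝ)))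
    + (∑ k : Fin d, b x k * fderiv ℝ f x (EuclideanSpace.single k (1:ℝ)))
    + ∫ z, (f (x + z) - f x - (if ‖z‖ < 1 then fderiv ℝ f x z else 0)) ∂(π x)

/-- The (conservative strong Markov) solution of the martingale problem for `(L, C_b²(ℝ^d))`,
where the coefficients satisfy: `a` continuous, bounded and uniformly elliptic, `b` bounded,
and `∫ (1 ∧ |z|²) sup_x π(x,dz) < ∞`. -/
structure JumpDiffusion (d : ℕ) (Ω : Type) [mΩ : MeasurableSpace Ω] where
  X : ℝ → Ω → Rd d
  P : Rd d → Measure Ω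
  F : Filtration ℝ≥0 mΩ
  a : Rd d → Matrix (Fin d) (Fin d) ℝ
  b : Rd d → Rd d
  π : Rd d → Measure (Rd d)
  isProb : ∀ x, IsProbabilityMeasure (P x)
  meas : ∀ t, Measurable (X t)
  adapted : Adapted F (fun (t : ℝ≥0) ω => X (t : ℝ) ω)
  start : ∀ x, P x {ω | X 0 ω = x} = 1
  right_cont : ∀ ω t, ContinuousWithinAt (fun s => X s ω) (Ici t) t
  left_lim : ∀ ω t, ∃ L, Tendsto (fun s => X s ω) (nhdsWithin t (Iio t)) (nhds L)
  a_cont : ∀ k l, Continuous fun x => a x k l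
  a_elliptic : ∃ lam : ℝ, 1 ≤ lam ∧ ∀ (x : Rd d) (ξ : Rd d),
      lam⁻¹ * ‖ξ‖ ^ 2 ≤ ∑ k, ∑ l, a x k l * ξ k * ξ l ∧
      ∑ k, ∑ l, a x k l * ξ k * ξ l ≤ lam * ‖ξ‖ ^ 2
  b_bdd : ∃ Kb : ℝ, ∀ x, ‖b x‖ ≤ Kb
  π_K : ∫⁻ z, ENNReal.ofReal (min 1 (‖z‖ ^ 2)) ∂(⨆ x, π x) < ⊤
  mart : ∀ f : Rd d → ℝ, ContDiff ℝ 2 f →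
      (∃ Kf : ℝ, ∀ x, |f x| + ‖fderiv ℝ f x‖ + ‖fderiv ℝ (fderiv ℝ f) x‖ ≤ Kf) →
      ∀ x, Martingale
        (fun (t : ℝ≥0) ω => f (X (t : ℝ) ω) - ∫ s in Ioc (0:ℝ) (t : ℝ), Lop a b π f (X s ω))
        F (P x)

/-- The standard exponential distribution (law of the auxiliary killing variable `η`). -/
def expM : Measure ℝ :=
  (volume.restrict (Ioi (0:ℝ))).withDensity fun u => ENNReal.ofReal (Real.exp (-u))

/-- First hitting time of `A` by `X` (with value `∞` if `A` is never hit). -/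
def hitT {d : ℕ} {Ω : Type} (X : ℝ → Ω → Rd d) (A : Set (Rd d)) (ω : Ω) : ℝ≥0∞ :=
  sInf (ENNReal.ofReal '' {t : ℝ | 0 ≤ t ∧ X t ω ∈ A})

/-- First exit time of `X` from `D`. -/
def exitT {d : ℕ} {Ω : Type} (X : ℝ → Ω → Rd d) (D : Set (Rd d)) (ω : Ω) : ℝ≥0∞ :=
  hitT X Dᶜ ω

/-- The lifetime `ζ = inf{t > 0 : ∫₀ᵗ q(X_s) ds > η}` of the subprocess of `X` killed at
rate `q`; the sample point of the enlarged probability space is `p = (ω, η)`. -/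
def lifeT {d : ℕ} {Ω : Type} (X : ℝ → Ω → Rd d) (q : Rd d → ℝ) (p : Ω × ℝ) : ℝ≥0∞ :=
  sInf (ENNReal.ofReal '' {t : ℝ | 0 < t ∧ p.2 < ∫ s in Ioc (0:ℝ) t, q (X s p.1)})

/-- First hitting time `σ^Z_A` of `A` by the killed process `Z`. -/
def hitZ {d : ℕ} {Ω : Type} (X : ℝ → Ω → Rd d) (q : Rd d → ℝ) (A : Set (Rd d))
    (p : Ω × ℝ) : ℝ≥0∞ :=
  sInf (ENNReal.ofReal '' {t : ℝ | 0 ≤ t ∧ ENNReal.ofReal t < lifeT X q p ∧ X t p.1 ∈ A})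

/-- First exit time `τ^Z_D` of the killed process `Z` from `D` (note `τ^Z_D ≤ ζ`). -/
def exitZ {d : ℕ} {Ω : Type} (X : ℝ → Ω → Rd d) (q : Rd d → ℝ) (D : Set (Rd d))
    (p : Ω × ℝ) : ℝ≥0∞ :=
  min (exitT X D p.1) (lifeT X q p)

end


/-- Auxiliary: the Lebesgue integral of `e^{-u}` over `(c, ∞)`. -/
lemma lintegral_exp_neg_Ioi (c : ℝ) :
    ∫⁻ u in Ioi c, ENNReal.ofReal (Real.exp (-u)) = ENNReal.ofReal (Real.exp (-c)) := by
  have hfi : Integrable (fun u : ℝ => Real.exp (-u)) ((volume : Measure ℝ).restrict (Ioi c)) := by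
    exact (by simpa using exp_neg_integrableOn_Ioi c (zero_lt_one) :
      IntegrableOn (fun u : ℝ => Real.exp (-u)) (Ioi c))
  have h1 := MeasureTheory.ofReal_integral_eq_lintegral_ofReal hfi
    (Filter.Eventually.of_forall fun u => (Real.exp_pos (-u)).le)
  rw [← h1, integral_exp_neg_Ioi]

instance : SFinite expM := by
  unfold expM
  infer_instance

/-- If `c₁ > 0` is a constant (independent of `x₀` and of `r ∈ (0,1/2]`) such
that `E_x τ_{B(x₀,2r)} ≤ c₁ r²` for all `x ∈ B(x₀,2r)`, then for every `x₀ ∈ ℝ^d`, every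
`r ∈ (0,1/2]` and every `x ∈ B(x₀,2r)`,
`P_x(ζ > τ_{B(x₀,2r)}) ≥ exp(−‖q‖_∞ r) − c₁ r`. -/
theorem statement5 (d : ℕ) (Ω : Type) [MeasurableSpace Ω] (J : JumpDiffusion d Ω)
    (q : Rd d → ℝ) (hqm : Measurable q) (hq0 : ∀ x, 0 ≤ q x) (hqb : ∃ Kq, ∀ x, q x ≤ Kq)
    (c₁ : ℝ) (hc₁ : 0 < c₁)
    (hbound : ∀ (x₀ : Rd d) (r : ℝ), 0 < r → r ≤ 1 / 2 →
      ∀ x ∈ Metric.ball x₀ (2 * r),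
        ∫⁻ ω, exitT J.X (Metric.ball x₀ (2 * r)) ω ∂(J.P x) ≤ ENNReal.ofReal (c₁ * r ^ 2)) :
    ∀ (x₀ : Rd d) (r : ℝ), 0 < r → r ≤ 1 / 2 →
      ∀ x ∈ Metric.ball x₀ (2 * r),
        ENNReal.ofReal (Real.exp (-((⨆ y, q y) * r)) - c₁ * r) ≤
          ((J.P x).prod expM)
            {p | exitT J.X (Metric.ball x₀ (2 * r)) p.1 < lifeT J.X q p} := by
  intro x₀ r hr hr2 x hx
  haveI := J.isProb x
  set D := Metric.ball x₀ (2 * r) with hD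
  set K := ⨆ y, q y with hKdef
  obtain ⟨Kq, hKq⟩ := hqb
  have hbdd : BddAbove (Set.range q) := ⟨Kq, by rintro _ ⟨y, rfl⟩; exact hKq y⟩
  have hqK : ∀ y, q y ≤ K := fun y => le_ciSup hbdd y
  have hK0 : (0:ℝ) ≤ K := le_trans (hq0 0) (hqK 0)
  have hKr0 : (0:ℝ) ≤ K * r := mul_nonneg hK0 hr.le
  -- pointwise bound on the additive functional
  have hint : ∀ (ω : Ω) (t : ℝ), 0 ≤ t → (∫ s in Ioc (0:ℝ) t, q (J.X s ω)) ≤ K * t := by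
    intro ω t ht
    haveI : Fact ((volume : Measure ℝ) (Ioc (0:ℝ) t) < ⊤) := ⟨measure_Ioc_lt_top⟩
    have hb : ∀ᵐ s ∂((volume : Measure ℝ).restrict (Ioc (0:ℝ) t)),
        ‖q (J.X s ω)‖ ≤ K := by
      refine Filter.Eventually.of_forall fun s => ?_
      rw [Real.norm_eq_abs, abs_of_nonneg (hq0 _)]
      exact hqK _
    have h2 := norm_integral_le_of_norm_le_const hb
    have h3 : (((volume : Measure ℝ).restrict (Ioc (0:ℝ) t)) univ).toReal = t := by
      rw [Measure.restrict_apply_univ, Real.volume_Ioc, sub_zero, ENNReal.toReal_ofReal ht]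
    calc (∫ s in Ioc (0:ℝ) t, q (J.X s ω))
        ≤ ‖∫ s in Ioc (0:ℝ) t, q (J.X s ω)‖ := by
          rw [Real.norm_eq_abs]; exact le_abs_self _
      _ ≤ K * (((volume : Measure ℝ).restrict (Ioc (0:ℝ) t)) univ).toReal := h2
      _ = K * t := by rw [h3]
  -- the lifetime is at least r when the exponential level is at least K * r
  have hzeta : ∀ p : Ω × ℝ, K * r ≤ p.2 → ENNReal.ofReal r ≤ lifeT J.X q p := by
    intro p hp
    refine le_sInf ?_
    rintro b ⟨t, ⟨ht0, hlt⟩, rfl⟩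
    refine ENNReal.ofReal_le_ofReal ?_
    by_contra h
    push_neg at h
    have h1 := hint p.1 t ht0.le
    have h2 : K * t ≤ K * r := mul_le_mul_of_nonneg_left h.le hK0
    linarith
  set A := {ω : Ω | exitT J.X D ω < ENNReal.ofReal r} with hA
  -- the rectangle is inside the target event
  have hincl : A ×ˢ Ici (K * r) ⊆
      {p : Ω × ℝ | exitT J.X D p.1 < lifeT J.X q p} := by
    rintro ⟨ω, u⟩ ⟨hω, hu⟩
    exact lt_of_lt_of_le hω (hzeta (ω, u) hu)
  set μ := J.P x with hμ
  -- Markov inequality on the measurable complement of the measurable hull of A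
  set U := (toMeasurable μ A)ᶜ with hU
  have hUm : MeasurableSet U := (measurableSet_toMeasurable μ A).compl
  have hUτ : ∀ ω ∈ U, ENNReal.ofReal r ≤ exitT J.X D ω := by
    intro ω hω
    by_contra hc
    exact hω (subset_toMeasurable μ A (not_le.mp hc))
  have markov : ENNReal.ofReal r * μ U ≤ ENNReal.ofReal (c₁ * r ^ 2) := by
    calc ENNReal.ofReal r * μ U
        = ∫⁻ _ in U, ENNReal.ofReal r ∂μ := by rw [setLIntegral_const]
      _ ≤ ∫⁻ ω in U, exitT J.X D ω ∂μ := by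
          refine lintegral_mono_ae ?_
          rw [ae_restrict_iff' hUm]
          exact Filter.Eventually.of_forall hUτ
      _ ≤ ∫⁻ ω, exitT J.X D ω ∂μ := lintegral_mono' Measure.restrict_le_self le_rfl
      _ ≤ ENNReal.ofReal (c₁ * r ^ 2) := hbound x₀ r hr hr2 x hx
  have hμU : μ U ≤ ENNReal.ofReal (c₁ * r) := by
    have h2 : ENNReal.ofReal (c₁ * r ^ 2) = ENNReal.ofReal r * ENNReal.ofReal (c₁ * r) := by
      rw [← ENNReal.ofReal_mul hr.le]; ring_nf
    rw [h2] at markov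
    exact (ENNReal.mul_le_mul_iff_right (ENNReal.ofReal_pos.mpr hr).ne' ENNReal.ofReal_ne_top).mp
      markov
  have hAmeas : 1 - ENNReal.ofReal (c₁ * r) ≤ μ A := by
    have h1 : μ (toMeasurable μ A) + μ U = 1 := by
      rw [hU, measure_add_measure_compl (measurableSet_toMeasurable μ A), measure_univ]
    rw [← measure_toMeasurable A]
    calc 1 - ENNReal.ofReal (c₁ * r) ≤ 1 - μ U := tsub_le_tsub_left hμU 1
      _ = μ (toMeasurable μ A) := by
          rw [← h1, ENNReal.add_sub_cancel_right (measure_ne_top μ U)]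
  -- lower bound for the exponential part
  have hexp : ENNReal.ofReal (Real.exp (-(K * r))) ≤ expM (Ici (K * r)) := by
    have h1 : expM (Ioi (K * r)) = ENNReal.ofReal (Real.exp (-(K * r))) := by
      rw [expM, withDensity_apply _ measurableSet_Ioi,
        Measure.restrict_restrict measurableSet_Ioi,
        inter_eq_left.mpr (Ioi_subset_Ioi hKr0)]
      exact lintegral_exp_neg_Ioi (K * r)
    rw [← h1]
    exact measure_mono Ioi_subset_Ici_self
  have he1 : Real.exp (-(K * r)) ≤ 1 := by
    rw [← Real.exp_zero]
    exact Real.exp_le_exp.mpr (neg_nonpos.mpr hKr0)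
  have hcr0 : (0:ℝ) ≤ c₁ * r := mul_nonneg hc₁.le hr.le
  calc ENNReal.ofReal (Real.exp (-(K * r)) - c₁ * r)
      ≤ ENNReal.ofReal ((1 - c₁ * r) * Real.exp (-(K * r))) := by
        refine ENNReal.ofReal_le_ofReal ?_
        nlinarith [Real.exp_pos (-(K * r))]
    _ = ENNReal.ofReal (1 - c₁ * r) * ENNReal.ofReal (Real.exp (-(K * r))) :=
        ENNReal.ofReal_mul' (Real.exp_pos _).le
    _ = (1 - ENNReal.ofReal (c₁ * r)) * ENNReal.ofReal (Real.exp (-(K * r))) := by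
        rw [ENNReal.ofReal_sub 1 hcr0, ENNReal.ofReal_one]
    _ ≤ μ A * expM (Ici (K * r)) := mul_le_mul' hAmeas hexp
    _ = ((J.P x).prod expM) (A ×ˢ Ici (K * r)) := (Measure.prod_prod _ _).symm
    _ ≤ ((J.P x).prod expM)
        {p : Ω × ℝ | exitT J.X D p.1 < lifeT J.X q p} := measure_mono hincl
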